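/- Let t, W, x ∈ ℂ with t ∉ {1, -1, -1/3, 5/3}, W² = (1+t)(5-3t), and x³ = -1/z where z = (1-t)²(1+t). Set w₁ = 1-t, w₂ = (1+t-W)/2, w₃ = (1+t+W)/2. Then each of x·w₁, x·w₂, x·w₃ is a root of the characteristic equation X³ - 2x·X² - 1 = 0 of the third-order Pell recursion. -/
import Mathlib


theorem characteristic_roots
    (t W x z w₁ w₂ w₃ : ℂ)
    (ht1 : t ≠ 1) (ht2 : t ≠ -1) (ht3 : t ≠ -1/3) (ht4 : t ≠ 5/3)
    (hW : W ^ 2 = (1 + t) * (5 - 3 * t))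
    (hz : z = (1 - t) ^ 2 * (1 + t))
    (hx : x ^ 3 = -1 / z)
    (hw1 : w₁ = 1 - t)
    (hw2 : w₂ = (1 + t - W) / 2)
    (hw3 : w₃ = (1 + t + W) / 2) :
    (x * w₁) ^ 3 - 2 * x * (x * w₁) ^ 2 - 1 = 0 ∧
    (x * w₂) ^ 3 - 2 * x * (x * w₂) ^ 2 - 1 = 0 ∧
    (x * w₃) ^ 3 - 2 * x * (x * w₃) ^ 2 - 1 = 0 := by
  have hz0 : z ≠ 0 := by
    rw [hz]
    have h1 : (1 : ℂ) - t ≠ 0 := sub_ne_zero.mpr (Ne.symm ht1)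
    have h2 : (1 : ℂ) + t ≠ 0 := by
      intro h; apply ht2; linear_combination h
    exact mul_ne_zero (pow_ne_zero 2 h1) h2
  have hx' : x ^ 3 * z = -1 := by
    rw [hx]; field_simp
  have key : ∀ w : ℂ, w ^ 3 - 2 * w ^ 2 + z = 0 →
      (x * w) ^ 3 - 2 * x * (x * w) ^ 2 - 1 = 0 := by
    intro w h
    linear_combination x ^ 3 * h - hx'
  refine ⟨key w₁ ?_, key w₂ ?_, key w₃ ?_⟩
  · rw [hw1, hz]; ring
  · rw [hw2, hz]
    linear_combination ((3 * (1 + t) - W) / 8 - 1 / 2) * hW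
  · rw [hw3, hz]
    linear_combination ((3 * (1 + t) + W) / 8 - 1 / 2) * hW
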